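/- Let X₁, X₂ be countable sets and c : X₁ × X₂ → (−∞,∞] a cost. If γ is a probability measure on X₁ × X₂ with finite cost whose support is c-cyclically monotone, then γ is optimal: for every probability measure γ̄ with the same two marginals and finite cost, ∫ c dγ ≤ ∫ c dγ̄. -/

import Mathlib

open MeasureTheory
open scoped ENNReal

/-- The nonnegative part of an extended real, as an `ℝ≥0∞`-valued quantity. -/
noncomputable def erealPos (y : EReal) : ℝ≥0∞ :=
  if y = ⊤ then ⊤ else ENNReal.ofReal y.toReal

/-- The (possibly infinite) cost `∫ c dγ` of a measure against an
`(-∞,∞]`-valued cost: positive part minus negative part, in `EReal`. -/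
noncomputable def ecost {Z : Type*} [MeasurableSpace Z] (c : Z → EReal)
    (γ : Measure Z) : EReal :=
  ((∫⁻ z, erealPos (c z) ∂γ : ℝ≥0∞) : EReal) - ((∫⁻ z, erealPos (-(c z)) ∂γ : ℝ≥0∞) : EReal)


open scoped Classical

namespace OT15



variable {X₁ X₂ : Type*}

/-- A closed alternating walk: `n+1` points in each side. Its `b`-edges are
`(xs i, ys i)` and its `a`-edges are `(xs (i+1), ys i)` (cyclically). -/
structure Wk (X₁ X₂ : Type*) where
  n : ℕ
  xs : Fin (n + 1) → X₁
  ys : Fin (n + 1) → X₂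

def Wk.aedge (W : Wk X₁ X₂) (i : Fin (W.n + 1)) : X₁ × X₂ :=
  (W.xs (finRotate _ i), W.ys i)

def Wk.bedge (W : Wk X₁ X₂) (i : Fin (W.n + 1)) : X₁ × X₂ :=
  (W.xs i, W.ys i)

/-- weighted counting function of a finite family of points -/
noncomputable def wcnt {ι Z : Type*} [Fintype ι] (e : ι → Z) (c : ι → ℝ) (z : Z) : ℝ :=
  ∑ i, c i * (if e i = z then (1:ℝ) else 0)

noncomputable def cnt {ι Z : Type*} [Fintype ι] (e : ι → Z) (z : Z) : ℝ :=
  wcnt e (fun _ => 1) z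

lemma cnt_eq {ι Z : Type*} [Fintype ι] (e : ι → Z) (z : Z) :
    cnt e z = ∑ i, (if e i = z then (1:ℝ) else 0) := by
  simp [cnt, wcnt]

lemma summable_single {ι Z : Type*} (e : ι → Z) (g : Z → ℝ) (i : ι) :
    Summable (fun z => g z * (if e i = z then (1:ℝ) else 0)) := by
  apply summable_of_ne_finset_zero (s := {e i})
  intro z hz
  simp only [Finset.mem_singleton] at hz
  simp [Ne.symm hz]

lemma summable_wcnt {ι Z : Type*} [Fintype ι] (e : ι → Z) (c : ι → ℝ) (g : Z → ℝ) :
    Summable (fun z => g z * wcnt e c z) := by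
  have : (fun z => g z * wcnt e c z)
      = fun z => ∑ i, c i * (g z * (if e i = z then (1:ℝ) else 0)) := by
    funext z
    simp only [wcnt, Finset.mul_sum]
    exact Finset.sum_congr rfl (fun i _ => by ring)
  rw [this]
  exact summable_sum (fun i _ => ((summable_single e g i).mul_left (c i)))

lemma tsum_mul_wcnt {ι Z : Type*} [Fintype ι] (e : ι → Z) (c : ι → ℝ) (g : Z → ℝ) :
    ∑' z, g z * wcnt e c z = ∑ i, c i * g (e i) := by
  have h1 : ∀ z, g z * wcnt e c z
      = ∑ i, c i * (g z * (if e i = z then (1:ℝ) else 0)) := by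
    intro z
    simp only [wcnt, Finset.mul_sum]
    exact Finset.sum_congr rfl (fun i _ => by ring)
  simp only [h1]
  rw [Summable.tsum_finsetSum (fun i _ => ((summable_single e g i).mul_left (c i)))]
  refine Finset.sum_congr rfl (fun i _ => ?_)
  rw [tsum_mul_left]
  congr 1
  rw [tsum_eq_single (e i) (fun z hz => by simp [Ne.symm hz])]
  simp

lemma summable_mul_cnt {ι Z : Type*} [Fintype ι] (e : ι → Z) (g : Z → ℝ) :
    Summable (fun z => g z * cnt e z) := summable_wcnt e _ g

lemma summable_cnt {ι Z : Type*} [Fintype ι] (e : ι → Z) :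
    Summable (cnt e) := by
  have := summable_wcnt e (fun _ => 1) (fun _ => 1)
  have h2 : Summable (fun z => wcnt e (fun _ => 1) z) := by simpa using this
  exact h2

lemma tsum_mul_cnt {ι Z : Type*} [Fintype ι] (e : ι → Z) (g : Z → ℝ) :
    ∑' z, g z * cnt e z = ∑ i, g (e i) := by
  have : ∀ z, cnt e z = wcnt e (fun _ => 1) z := fun z => rfl
  simp only [this]
  rw [tsum_mul_wcnt]; simp

lemma tsum_cnt {ι Z : Type*} [Fintype ι] (e : ι → Z) :
    ∑' z, cnt e z = (Fintype.card ι : ℝ) := by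
  have := tsum_mul_cnt e (fun _ => 1)
  simpa using this

lemma cnt_nonneg {ι Z : Type*} [Fintype ι] (e : ι → Z) (z : Z) : 0 ≤ cnt e z := by
  rw [cnt_eq]
  exact Finset.sum_nonneg (fun i _ => by positivity)

lemma cnt_le_card {ι Z : Type*} [Fintype ι] (e : ι → Z) (z : Z) :
    cnt e z ≤ (Fintype.card ι : ℝ) := by
  rw [cnt_eq]
  calc ∑ i, (if e i = z then (1:ℝ) else 0) ≤ ∑ _i : ι, (1:ℝ) :=
        Finset.sum_le_sum (fun i _ => by split <;> norm_num)
    _ = (Fintype.card ι : ℝ) := by simp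

lemma cnt_pos_of_eq {ι Z : Type*} [Fintype ι] (e : ι → Z) (i : ι) :
    (1:ℝ) ≤ cnt e (e i) := by
  rw [cnt_eq]
  calc (1:ℝ) = ∑ j ∈ {i}, (if e j = e i then (1:ℝ) else 0) := by
        rw [Finset.sum_singleton, if_pos rfl]
    _ ≤ _ := Finset.sum_le_sum_of_subset_of_nonneg (Finset.subset_univ _)
        (fun j _ _ => by split <;> norm_num)

/-- decomposition of a cnt on a product into fibers -/
lemma cnt_prod_eq {ι : Type*} [Fintype ι] (e : ι → X₁ × X₂) (x : X₁) :
    (fun y => cnt e (x, y)) = wcnt (fun i => (e i).2) (fun i => if (e i).1 = x then 1 else 0) := by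
  funext y
  rw [cnt_eq, wcnt]
  refine Finset.sum_congr rfl (fun i _ => ?_)
  by_cases h1 : (e i).1 = x <;> by_cases h2 : (e i).2 = y <;>
    simp [Prod.ext_iff, h1, h2]

lemma cnt_prod_eq' {ι : Type*} [Fintype ι] (e : ι → X₁ × X₂) (y : X₂) :
    (fun x => cnt e (x, y)) = wcnt (fun i => (e i).1) (fun i => if (e i).2 = y then 1 else 0) := by
  funext x
  rw [cnt_eq, wcnt]
  refine Finset.sum_congr rfl (fun i _ => ?_)
  by_cases h1 : (e i).1 = x <;> by_cases h2 : (e i).2 = y <;>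
    simp [Prod.ext_iff, h1, h2]

lemma summable_cnt_row {ι : Type*} [Fintype ι] (e : ι → X₁ × X₂) (x : X₁) :
    Summable (fun y => cnt e (x, y)) := by
  rw [cnt_prod_eq]
  have := summable_wcnt (fun i => (e i).2) (fun i => if (e i).1 = x then (1:ℝ) else 0) (fun _ => 1)
  simpa using this

lemma summable_cnt_col {ι : Type*} [Fintype ι] (e : ι → X₁ × X₂) (y : X₂) :
    Summable (fun x => cnt e (x, y)) := by
  rw [cnt_prod_eq']
  have := summable_wcnt (fun i => (e i).1) (fun i => if (e i).2 = y then (1:ℝ) else 0) (fun _ => 1)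
  simpa using this

lemma tsum_cnt_row {ι : Type*} [Fintype ι] (e : ι → X₁ × X₂) (x : X₁) :
    ∑' y, cnt e (x, y) = ∑ i, (if (e i).1 = x then (1:ℝ) else 0) := by
  rw [cnt_prod_eq]
  have := tsum_mul_wcnt (fun i => (e i).2)
    (fun i => if (e i).1 = x then (1:ℝ) else 0) (fun _ => 1)
  simpa using this

lemma tsum_cnt_col {ι : Type*} [Fintype ι] (e : ι → X₁ × X₂) (y : X₂) :
    ∑' x, cnt e (x, y) = ∑ i, (if (e i).2 = y then (1:ℝ) else 0) := by
  rw [cnt_prod_eq']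
  have := tsum_mul_wcnt (fun i => (e i).1)
    (fun i => if (e i).2 = y then (1:ℝ) else 0) (fun _ => 1)
  simpa using this

/-- the row counts of the `a`-edges and `b`-edges of a closed walk agree -/
lemma walk_row_eq (W : Wk X₁ X₂) (x : X₁) :
    ∑' y, cnt W.aedge (x, y) = ∑' y, cnt W.bedge (x, y) := by
  rw [tsum_cnt_row, tsum_cnt_row]
  have : ∀ i, (W.aedge i).1 = W.xs (finRotate _ i) := fun i => rfl
  simp only [this, fun i => (rfl : (W.bedge i).1 = W.xs i)]
  exact Equiv.sum_comp (finRotate (W.n + 1)) (fun j => if W.xs j = x then (1:ℝ) else 0)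

lemma walk_col_eq (W : Wk X₁ X₂) (y : X₂) :
    ∑' x, cnt W.aedge (x, y) = ∑' x, cnt W.bedge (x, y) := by
  rw [tsum_cnt_col, tsum_cnt_col]
  rfl


lemma cnt_eq_zero_of_ne {ι Z : Type*} [Fintype ι] (e : ι → Z) {z : Z}
    (h : ∀ i, e i ≠ z) : cnt e z = 0 := by
  rw [cnt_eq]
  exact Finset.sum_eq_zero (fun i _ => if_neg (h i))




theorem cycle_exists (a b : X₁ × X₂ → ℝ≥0∞)
    (hrow : ∀ x, ∑' y, a (x, y) = ∑' y, b (x, y))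
    (hcol : ∀ y, ∑' x, a (x, y) = ∑' x, b (x, y))
    (hbfin : ∑' z, b z ≠ ⊤)
    {z₀ : X₁ × X₂} (hz₀ : b z₀ ≠ 0) :
    ∃ (n : ℕ) (xs : Fin (n+1) → X₁) (ys : Fin (n+1) → X₂),
      (∀ i, a (xs (finRotate _ i), ys i) ≠ 0) ∧ (∀ i, b (xs i, ys i) ≠ 0) := by
  obtain ⟨x₀, y₀⟩ := z₀
  -- alternating paths from x₀
  set Pth : X₂ → Prop := fun y => ∃ (n : ℕ) (xs : Fin (n+1) → X₁) (ys : Fin (n+1) → X₂),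
      xs 0 = x₀ ∧ ys (Fin.last n) = y ∧ (∀ i, b (xs i, ys i) ≠ 0) ∧
      (∀ i : Fin n, a (xs i.succ, ys i.castSucc) ≠ 0) with hPth
  have hRxdef : ∀ x : X₁, (x = x₀ ∨ ∃ y, Pth y ∧ a (x, y) ≠ 0) → True := fun _ _ => trivial
  set Rx : Set X₁ := {x | x = x₀ ∨ ∃ y, Pth y ∧ a (x, y) ≠ 0} with hRx
  -- closure: from a reachable x, b-edges lead to reachable y
  have hclos : ∀ x ∈ Rx, ∀ y, b (x, y) ≠ 0 → Pth y := by
    rintro x (rfl | ⟨y', ⟨n, xs, ys, h0, hlast, hb, ha⟩, hay'⟩) y hby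
    · exact ⟨0, fun _ => x, fun _ => y, rfl, rfl, fun i => by simpa using hby, fun i => i.elim0⟩
    · refine ⟨n + 1, Fin.snoc xs x, Fin.snoc ys y, ?_, ?_, ?_, ?_⟩
      · rw [show (0 : Fin (n+2)) = Fin.castSucc 0 by rfl, Fin.snoc_castSucc]; exact h0
      · rw [Fin.snoc_last]
      · intro i
        refine Fin.lastCases ?_ (fun j => ?_) i
        · rw [Fin.snoc_last, Fin.snoc_last]; exact hby
        · rw [Fin.snoc_castSucc, Fin.snoc_castSucc]; exact hb j
      · intro i
        refine Fin.lastCases ?_ (fun j => ?_) i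
        · rw [Fin.succ_last, Fin.snoc_last, Fin.snoc_castSucc]
          rw [hlast]; exact hay'
        · rw [Fin.succ_castSucc, Fin.snoc_castSucc, Fin.snoc_castSucc]
          exact ha j
  have hx₀ : x₀ ∈ Rx := Or.inl rfl
  -- key claim: some reachable y has a-mass back to x₀
  have hkey : ∃ y, Pth y ∧ a (x₀, y) ≠ 0 := by
    by_contra hc
    push_neg at hc
    set F : X₁ → ℝ≥0∞ := fun x => if x ∈ Rx then 1 else 0 with hF
    set G : X₂ → ℝ≥0∞ := fun y => if Pth y then 1 else 0 with hG
    have hFdef : ∀ x, F x = if x ∈ Rx then 1 else 0 := fun _ => rfl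
    have hGdef : ∀ y, G y = if Pth y then 1 else 0 := fun _ => rfl
    have hF1 : ∀ x, F x ≤ 1 := fun x => by rw [hFdef]; split <;> simp
    have hG1 : ∀ y, G y ≤ 1 := fun y => by rw [hGdef]; split <;> simp
    have hFx₀ : F x₀ = 1 := if_pos hx₀
    -- restricted sums
    have e1 : ∀ x, F x * (∑' y, b (x, y)) = ∑' y, F x * (G y * b (x, y)) := by
      intro x
      by_cases hx : x ∈ Rx
      · rw [hFdef]; simp only [if_pos hx, one_mul]
        refine tsum_congr (fun y => ?_)
        by_cases hby : b (x, y) = 0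
        · simp [hby]
        · rw [hGdef, if_pos (hclos x hx y hby), one_mul]
      · rw [hFdef]; simp only [if_neg hx, zero_mul, tsum_zero]
    have e2 : ∀ y, G y * (∑' x, a (x, y)) = ∑' x, G y * (F x * a (x, y)) := by
      intro y
      by_cases hy : Pth y
      · rw [hGdef]; simp only [if_pos hy, one_mul]
        refine tsum_congr (fun x => ?_)
        by_cases hax : a (x, y) = 0
        · simp [hax]
        · rw [hFdef, if_pos (show x ∈ Rx from Or.inr ⟨y, hy, hax⟩), one_mul]
      · rw [hGdef]; simp only [if_neg hy, zero_mul, tsum_zero]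
    -- the chain of (in)equalities
    set A : ℝ≥0∞ := ∑' x, F x * (∑' y, a (x, y)) with hA
    set C : ℝ≥0∞ := ∑' x, F x * (∑' y, G y * a (x, y)) with hC
    have hAB : A = ∑' x, F x * (∑' y, b (x, y)) := tsum_congr (fun x => by rw [hrow])
    have hABfin : A ≠ ⊤ := by
      rw [hAB]
      have : ∑' x, F x * (∑' y, b (x, y)) ≤ ∑' x, ∑' y, b (x, y) :=
        ENNReal.tsum_le_tsum (fun x => by
          calc F x * _ ≤ 1 * _ := mul_le_mul_left (hF1 x) _
            _ = _ := one_mul _)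
      rw [← ENNReal.tsum_prod] at this
      exact fun h => hbfin (top_le_iff.mp (h ▸ this))
    have hCA : C ≤ A := by
      refine ENNReal.tsum_le_tsum (fun x => mul_le_mul_right ?_ _)
      exact ENNReal.tsum_le_tsum (fun y =>
        calc G y * a (x, y) ≤ 1 * a (x, y) := mul_le_mul_left (hG1 y) _
          _ = a (x, y) := one_mul _)
    have hAC : A ≤ C := by
      rw [hAB]
      calc ∑' x, F x * (∑' y, b (x, y)) = ∑' x, ∑' y, F x * (G y * b (x, y)) :=
            tsum_congr e1
        _ = ∑' y, ∑' x, F x * (G y * b (x, y)) := ENNReal.tsum_comm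
        _ ≤ ∑' y, ∑' x, G y * b (x, y) := ENNReal.tsum_le_tsum (fun y =>
            ENNReal.tsum_le_tsum (fun x =>
              calc F x * (G y * b (x,y)) ≤ 1 * (G y * b (x,y)) := mul_le_mul_left (hF1 x) _
                _ = _ := one_mul _))
        _ = ∑' y, G y * (∑' x, b (x, y)) := tsum_congr (fun y => (ENNReal.tsum_mul_left).symm ▸ rfl)
        _ = ∑' y, G y * (∑' x, a (x, y)) := tsum_congr (fun y => by rw [hcol])
        _ = ∑' y, ∑' x, G y * (F x * a (x, y)) := tsum_congr e2
        _ = ∑' x, ∑' y, G y * (F x * a (x, y)) := ENNReal.tsum_comm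
        _ = ∑' x, F x * (∑' y, G y * a (x, y)) := by
            refine tsum_congr (fun x => ?_)
            rw [← ENNReal.tsum_mul_left]
            exact tsum_congr (fun y => by ring)
    have hACeq : A = C := le_antisymm hAC hCA
    -- now split off the x₀ term
    have hsplitA : A = F x₀ * (∑' y, a (x₀, y)) + ∑' x, if x = x₀ then 0 else F x * (∑' y, a (x, y)) := by
      rw [hA]; exact ENNReal.tsum_eq_add_tsum_ite x₀
    have hsplitC : C = F x₀ * (∑' y, G y * a (x₀, y)) + ∑' x, if x = x₀ then 0 else F x * (∑' y, G y * a (x, y)) := by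
      rw [hC]; exact ENNReal.tsum_eq_add_tsum_ite x₀
    have hCx₀ : (∑' y, G y * a (x₀, y)) = 0 := by
      rw [ENNReal.tsum_eq_zero]
      intro y
      by_cases hy : Pth y
      · rw [hc y hy, mul_zero]
      · rw [hGdef, if_neg hy, zero_mul]
    have hrest : (∑' x, if x = x₀ then 0 else F x * (∑' y, G y * a (x, y)))
        ≤ ∑' x, if x = x₀ then 0 else F x * (∑' y, a (x, y)) := by
      refine ENNReal.tsum_le_tsum (fun x => ?_)
      split
      · exact le_rfl
      · exact mul_le_mul_right (ENNReal.tsum_le_tsum (fun y =>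
          calc G y * a (x, y) ≤ 1 * a (x, y) := mul_le_mul_left (hG1 y) _
            _ = _ := one_mul _)) _
    have hrestfin : (∑' x, if x = x₀ then 0 else F x * (∑' y, a (x, y))) ≠ ⊤ := by
      intro h
      apply hABfin
      rw [hsplitA, h, add_top]
    have hfinal : F x₀ * (∑' y, a (x₀, y)) + (∑' x, if x = x₀ then 0 else F x * (∑' y, a (x, y)))
        ≤ 0 + (∑' x, if x = x₀ then 0 else F x * (∑' y, a (x, y))) := by
      rw [← hsplitA, hACeq, hsplitC, hCx₀, mul_zero, zero_add, zero_add]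
      exact hrest
    have hzero : F x₀ * (∑' y, a (x₀, y)) ≤ 0 :=
      (ENNReal.add_le_add_iff_right hrestfin).mp hfinal
    rw [hFx₀, one_mul] at hzero
    have : b (x₀, y₀) ≤ ∑' y, a (x₀, y) := by
      rw [hrow]; exact ENNReal.le_tsum y₀
    exact hz₀ (le_antisymm (le_trans this hzero) zero_le)
  -- build the closed walk
  obtain ⟨y', ⟨n, xs, ys, h0, hlast, hb, ha⟩, hay'⟩ := hkey
  refine ⟨n, xs, ys, ?_, hb⟩
  intro i
  rw [finRotate_succ_apply]
  refine Fin.lastCases ?_ (fun j => ?_) i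
  · rw [Fin.last_add_one, h0, hlast]; exact hay'
  · rw [Fin.coeSucc_eq_succ]
    exact ha j

/-- a peeling amount `t` is feasible for walk `W` at state `p` -/
def Feas (p : (X₁ × X₂ → ℝ) × (X₁ × X₂ → ℝ)) (t : ℝ) (W : Wk X₁ X₂) : Prop :=
  ∀ z, t * cnt W.aedge z ≤ p.1 z ∧ t * cnt W.bedge z ≤ p.2 z

def lamSet (p : (X₁ × X₂ → ℝ) × (X₁ × X₂ → ℝ)) : Set ℝ :=
  {t | 0 < t ∧ ∃ W, Feas p t W}

section Pick

variable [Nonempty X₁] [Nonempty X₂]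

noncomputable def pick (p : (X₁ × X₂ → ℝ) × (X₁ × X₂ → ℝ)) : ℝ × Wk X₁ X₂ :=
  if h : ∃ tW : ℝ × Wk X₁ X₂, 0 < tW.1 ∧ Feas p tW.1 tW.2 ∧ sSup (lamSet p) ≤ 2 * tW.1
  then h.choose
  else (0, ⟨0, fun _ => Classical.arbitrary X₁, fun _ => Classical.arbitrary X₂⟩)

lemma pick_nonneg (p : (X₁ × X₂ → ℝ) × (X₁ × X₂ → ℝ)) : 0 ≤ (pick p).1 := by
  rw [pick]; split
  · next h => exact le_of_lt h.choose_spec.1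
  · exact le_rfl

lemma pick_feas (p : (X₁ × X₂ → ℝ) × (X₁ × X₂ → ℝ))
    (hp1 : ∀ z, 0 ≤ p.1 z) (hp2 : ∀ z, 0 ≤ p.2 z) :
    Feas p (pick p).1 (pick p).2 := by
  rw [pick]; split
  · next h => exact h.choose_spec.2.1
  · intro z; constructor <;> · simp only [zero_mul]; first | exact hp1 z | exact hp2 z

lemma pick_spec (p : (X₁ × X₂ → ℝ) × (X₁ × X₂ → ℝ))
    (hne : (lamSet p).Nonempty) (hbdd : BddAbove (lamSet p)) :
    0 < (pick p).1 ∧ sSup (lamSet p) ≤ 2 * (pick p).1 := by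
  have hs : 0 < sSup (lamSet p) := by
    obtain ⟨t, ht⟩ := hne
    exact lt_of_lt_of_le ht.1 (le_csSup hbdd ht)
  obtain ⟨t, htmem, hlt⟩ := exists_lt_of_lt_csSup hne (half_lt_self hs)
  obtain ⟨W, hW⟩ := htmem.2
  have hex : ∃ tW : ℝ × Wk X₁ X₂, 0 < tW.1 ∧ Feas p tW.1 tW.2 ∧ sSup (lamSet p) ≤ 2 * tW.1 :=
    ⟨(t, W), htmem.1, hW, by
      have : sSup (lamSet p) / 2 < t := hlt
      simp only at this ⊢
      linarith⟩
  rw [pick, dif_pos hex]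
  exact ⟨hex.choose_spec.1, hex.choose_spec.2.2⟩

noncomputable def stepFn (p : (X₁ × X₂ → ℝ) × (X₁ × X₂ → ℝ)) :
    (X₁ × X₂ → ℝ) × (X₁ × X₂ → ℝ) :=
  (fun z => p.1 z - (pick p).1 * cnt (pick p).2.aedge z,
   fun z => p.2 z - (pick p).1 * cnt (pick p).2.bedge z)

noncomputable def seqFn (a b : X₁ × X₂ → ℝ) : ℕ → (X₁ × X₂ → ℝ) × (X₁ × X₂ → ℝ) :=
  fun k => Nat.rec (motive := fun _ => (X₁ × X₂ → ℝ) × (X₁ × X₂ → ℝ)) (a, b)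
    (fun _ p => stepFn p) k

end Pick

set_option maxHeartbeats 2000000 in
theorem core (a b r : X₁ × X₂ → ℝ)
    (ha0 : ∀ z, 0 ≤ a z) (hb0 : ∀ z, 0 ≤ b z)
    (hsa : Summable a) (hsb : Summable b)
    (hra : Summable (fun z => |r z| * a z)) (hrb : Summable (fun z => |r z| * b z))
    (hrow : ∀ x, ∑' y, a (x, y) = ∑' y, b (x, y))
    (hcol : ∀ y, ∑' x, a (x, y) = ∑' x, b (x, y))
    (hm : ∀ W : Wk X₁ X₂, (∀ i, 0 < a (W.aedge i)) → (∀ i, 0 < b (W.bedge i)) →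
      ∑ i, r (W.aedge i) ≤ ∑ i, r (W.bedge i)) :
    ∑' z, r z * a z ≤ ∑' z, r z * b z := by
  rcases isEmpty_or_nonempty X₁ with hX₁ | hX₁
  · haveI : IsEmpty (X₁ × X₂) := ⟨fun z => hX₁.false z.1⟩
    rw [tsum_empty, tsum_empty]
  rcases isEmpty_or_nonempty X₂ with hX₂ | hX₂
  · haveI : IsEmpty (X₁ × X₂) := ⟨fun z => hX₂.false z.2⟩
    rw [tsum_empty, tsum_empty]
  -- the peeling sequence
  have hstep1 : ∀ k z, (seqFn a b (k+1)).1 z = (seqFn a b k).1 z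
      - (pick (seqFn a b k)).1 * cnt (pick (seqFn a b k)).2.aedge z :=
    fun k z => rfl
  have hstep2 : ∀ k z, (seqFn a b (k+1)).2 z = (seqFn a b k).2 z
      - (pick (seqFn a b k)).1 * cnt (pick (seqFn a b k)).2.bedge z :=
    fun k z => rfl
  set P : ℕ → (X₁ × X₂ → ℝ) × (X₁ × X₂ → ℝ) := seqFn a b with hP
  set lam : ℕ → ℝ := fun k => (pick (P k)).1 with hlam
  set Wf : ℕ → Wk X₁ X₂ := fun k => (pick (P k)).2 with hWf
  replace hstep1 : ∀ k z, (P (k+1)).1 z = (P k).1 z - lam k * cnt (Wf k).aedge z := hstep1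
  replace hstep2 : ∀ k z, (P (k+1)).2 z = (P k).2 z - lam k * cnt (Wf k).bedge z := hstep2
  have hlamdef : ∀ k, lam k = (pick (P k)).1 := fun k => rfl
  have hWfdef : ∀ k, Wf k = (pick (P k)).2 := fun k => rfl
  clear_value lam Wf
  have hlam0 : ∀ k, 0 ≤ lam k := fun k => by rw [hlamdef k]; exact pick_nonneg (P k)
  -- invariant
  have good : ∀ k, (∀ z, 0 ≤ (P k).1 z) ∧ (∀ z, 0 ≤ (P k).2 z) ∧
      (∀ z, (P k).1 z ≤ a z) ∧ (∀ z, (P k).2 z ≤ b z) ∧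
      (∀ x, ∑' y, (P k).1 (x, y) = ∑' y, (P k).2 (x, y)) ∧
      (∀ y, ∑' x, (P k).1 (x, y) = ∑' x, (P k).2 (x, y)) := by
    intro k
    induction k with
    | zero => exact ⟨ha0, hb0, fun z => le_rfl, fun z => le_rfl, hrow, hcol⟩
    | succ k ih =>
      obtain ⟨h1, h2, h3, h4, h5, h6⟩ := ih
      have feas : Feas (P k) (lam k) (Wf k) := by
        rw [hlamdef k, hWfdef k]; exact pick_feas (P k) h1 h2
      have hq1 : ∀ z, Summable (fun y => (P k).1 (z, y)) := fun x =>
        Summable.of_nonneg_of_le (fun y => h1 (x, y)) (fun y => h3 (x, y)) (hsa.prod_factor x)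
      have hq2 : ∀ x, Summable (fun y => (P k).2 (x, y)) := fun x =>
        Summable.of_nonneg_of_le (fun y => h2 (x, y)) (fun y => h4 (x, y)) (hsb.prod_factor x)
      have hq1' : ∀ y, Summable (fun x => (P k).1 (x, y)) := fun y =>
        Summable.of_nonneg_of_le (fun x => h1 (x, y)) (fun x => h3 (x, y))
          (hsa.prod_symm.prod_factor y)
      have hq2' : ∀ y, Summable (fun x => (P k).2 (x, y)) := fun y =>
        Summable.of_nonneg_of_le (fun x => h2 (x, y)) (fun x => h4 (x, y))
          (hsb.prod_symm.prod_factor y)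
      refine ⟨?_, ?_, ?_, ?_, ?_, ?_⟩
      · intro z; rw [hstep1]; exact sub_nonneg.2 (feas z).1
      · intro z; rw [hstep2]; exact sub_nonneg.2 (feas z).2
      · intro z; rw [hstep1]
        have : 0 ≤ lam k * cnt (Wf k).aedge z := mul_nonneg (hlam0 k) (cnt_nonneg _ _)
        linarith [h3 z]
      · intro z; rw [hstep2]
        have : 0 ≤ lam k * cnt (Wf k).bedge z := mul_nonneg (hlam0 k) (cnt_nonneg _ _)
        linarith [h4 z]
      · intro x
        have e1 : (fun y => (P (k+1)).1 (x, y))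
            = fun y => (P k).1 (x, y) - lam k * cnt (Wf k).aedge (x, y) :=
          funext (fun y => hstep1 k (x, y))
        have e2 : (fun y => (P (k+1)).2 (x, y))
            = fun y => (P k).2 (x, y) - lam k * cnt (Wf k).bedge (x, y) :=
          funext (fun y => hstep2 k (x, y))
        rw [e1, e2, Summable.tsum_sub (hq1 x) (((summable_cnt_row _ x)).mul_left (lam k)),
          Summable.tsum_sub (hq2 x) (((summable_cnt_row _ x)).mul_left (lam k)),
          tsum_mul_left, tsum_mul_left, h5 x, walk_row_eq]
      · intro y
        have e1 : (fun x => (P (k+1)).1 (x, y))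
            = fun x => (P k).1 (x, y) - lam k * cnt (Wf k).aedge (x, y) :=
          funext (fun x => hstep1 k (x, y))
        have e2 : (fun x => (P (k+1)).2 (x, y))
            = fun x => (P k).2 (x, y) - lam k * cnt (Wf k).bedge (x, y) :=
          funext (fun x => hstep2 k (x, y))
        rw [e1, e2, Summable.tsum_sub (hq1' y) (((summable_cnt_col _ y)).mul_left (lam k)),
          Summable.tsum_sub (hq2' y) (((summable_cnt_col _ y)).mul_left (lam k)),
          tsum_mul_left, tsum_mul_left, h6 y, walk_col_eq]
  -- summability of the states
  have hsP1 : ∀ k, Summable ((P k).1) := fun k =>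
    Summable.of_nonneg_of_le (good k).1 (good k).2.2.1 hsa
  have hsP2 : ∀ k, Summable ((P k).2) := fun k =>
    Summable.of_nonneg_of_le (good k).2.1 (good k).2.2.2.1 hsb
  -- mass bookkeeping
  have hBmass : ∀ k, ∑' z, (P (k+1)).2 z
      = ∑' z, (P k).2 z - lam k * ((Wf k).n + 1) := by
    intro k
    have e2 : (fun z => (P (k+1)).2 z)
        = fun z => (P k).2 z - lam k * cnt (Wf k).bedge z := funext (hstep2 k)
    rw [e2, Summable.tsum_sub (hsP2 k) ((summable_cnt _).mul_left (lam k)), tsum_mul_left, tsum_cnt]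
    simp
  have hmassnn : ∀ k, 0 ≤ ∑' z, (P k).2 z := fun k => tsum_nonneg (good k).2.1
  have hlampart : ∀ k, ∑ j ∈ Finset.range k, lam j * ((Wf j).n + 1) + ∑' z, (P k).2 z
      ≤ ∑' z, b z := by
    intro k
    induction k with
    | zero =>
      rw [Finset.range_zero, Finset.sum_empty, zero_add]
      exact le_of_eq (tsum_congr (fun z => rfl))
    | succ k ih =>
      rw [Finset.sum_range_succ, hBmass k]
      linarith
  have hlamnpart : ∀ k, ∑ j ∈ Finset.range k, lam j * ((Wf j).n + 1) ≤ ∑' z, b z := by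
    intro k; linarith [hlampart k, hmassnn k]
  have hlamn_nonneg : ∀ j, 0 ≤ lam j * ((Wf j).n + 1) := fun j =>
    mul_nonneg (hlam0 j) (by positivity)
  have hlamnsum : Summable (fun j => lam j * ((Wf j).n + 1)) :=
    summable_of_sum_range_le hlamn_nonneg hlamnpart
  have hlamsum : Summable lam := by
    refine Summable.of_nonneg_of_le hlam0 (fun j => ?_) hlamnsum
    nth_rewrite 1 [← mul_one (lam j)]
    exact mul_le_mul_of_nonneg_left (le_add_of_nonneg_left (Nat.cast_nonneg _)) (hlam0 j)
  have hlamtend : Filter.Tendsto lam Filter.atTop (nhds 0) := hlamsum.tendsto_atTop_zero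
  -- closed forms
  have hAclosed : ∀ k z, a z - (P k).1 z
      = ∑ j ∈ Finset.range k, lam j * cnt (Wf j).aedge z := by
    intro k z
    induction k with
    | zero => simp [hP, seqFn]
    | succ k ih => rw [Finset.sum_range_succ, hstep1, ← ih]; ring
  have hBclosed : ∀ k z, b z - (P k).2 z
      = ∑ j ∈ Finset.range k, lam j * cnt (Wf j).bedge z := by
    intro k z
    induction k with
    | zero => simp [hP, seqFn]
    | succ k ih => rw [Finset.sum_range_succ, hstep2, ← ih]; ring
  have htermA_nonneg : ∀ z j, 0 ≤ lam j * cnt (Wf j).aedge z := fun z j =>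
    mul_nonneg (hlam0 j) (cnt_nonneg _ _)
  have htermB_nonneg : ∀ z j, 0 ≤ lam j * cnt (Wf j).bedge z := fun z j =>
    mul_nonneg (hlam0 j) (cnt_nonneg _ _)
  have hsumA : ∀ z, Summable (fun j => lam j * cnt (Wf j).aedge z) := by
    intro z
    refine summable_of_sum_range_le (c := a z) (htermA_nonneg z) (fun k => ?_)
    rw [← hAclosed k z]
    linarith [(good k).1 z]
  have hsumB : ∀ z, Summable (fun j => lam j * cnt (Wf j).bedge z) := by
    intro z
    refine summable_of_sum_range_le (c := b z) (htermB_nonneg z) (fun k => ?_)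
    rw [← hBclosed k z]
    linarith [(good k).2.1 z]
  set aInf : X₁ × X₂ → ℝ := fun z => a z - ∑' j, lam j * cnt (Wf j).aedge z with haInf
  set bInf : X₁ × X₂ → ℝ := fun z => b z - ∑' j, lam j * cnt (Wf j).bedge z with hbInf
  have haInf_nonneg : ∀ z, 0 ≤ aInf z := by
    intro z
    have : ∑' j, lam j * cnt (Wf j).aedge z ≤ a z := by
      refine Real.tsum_le_of_sum_range_le (htermA_nonneg z) (fun k => ?_)
      rw [← hAclosed k z]; linarith [(good k).1 z]
    simp only [haInf]; linarith
  have hbInf_nonneg : ∀ z, 0 ≤ bInf z := by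
    intro z
    have : ∑' j, lam j * cnt (Wf j).bedge z ≤ b z := by
      refine Real.tsum_le_of_sum_range_le (htermB_nonneg z) (fun k => ?_)
      rw [← hBclosed k z]; linarith [(good k).2.1 z]
    simp only [hbInf]; linarith
  have haInf_le : ∀ k z, aInf z ≤ (P k).1 z := by
    intro k z
    have h1 : ∑ j ∈ Finset.range k, lam j * cnt (Wf j).aedge z
        ≤ ∑' j, lam j * cnt (Wf j).aedge z :=
      Summable.sum_le_tsum _ (fun j _ => htermA_nonneg z j) (hsumA z)
    have h2 := hAclosed k z
    simp only [haInf]; linarith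
  have hbInf_le : ∀ k z, bInf z ≤ (P k).2 z := by
    intro k z
    have h1 : ∑ j ∈ Finset.range k, lam j * cnt (Wf j).bedge z
        ≤ ∑' j, lam j * cnt (Wf j).bedge z :=
      Summable.sum_le_tsum _ (fun j _ => htermB_nonneg z j) (hsumB z)
    have h2 := hBclosed k z
    simp only [hbInf]; linarith
  have haInf_le_a : ∀ z, aInf z ≤ a z := fun z => haInf_le 0 z
  have hbInf_le_b : ∀ z, bInf z ≤ b z := fun z => hbInf_le 0 z
  have hsaInf : Summable aInf := Summable.of_nonneg_of_le haInf_nonneg haInf_le_a hsa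
  have hsbInf : Summable bInf := Summable.of_nonneg_of_le hbInf_nonneg hbInf_le_b hsb
  -- Fubini for rows/cols of the peeled series
  have hrowcnt_bdd : ∀ (j : ℕ) (x : X₁),
      ∑' y, cnt (Wf j).aedge (x, y) ≤ ((Wf j).n + 1 : ℝ) := by
    intro j x
    rw [tsum_cnt_row]
    calc ∑ i, (if ((Wf j).aedge i).1 = x then (1:ℝ) else 0)
        ≤ ∑ _i : Fin ((Wf j).n + 1), (1:ℝ) :=
          Finset.sum_le_sum (fun i _ => by split <;> norm_num)
      _ = ((Wf j).n + 1 : ℝ) := by simp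
  have hSA_le_a : ∀ z, ∑' j, lam j * cnt (Wf j).aedge z ≤ a z := by
    intro z; have := haInf_nonneg z; simp only [haInf] at this; linarith
  have hSB_le_b : ∀ z, ∑' j, lam j * cnt (Wf j).bedge z ≤ b z := by
    intro z; have := hbInf_nonneg z; simp only [hbInf] at this; linarith
  have hswapA : ∀ x, ∑' y, (∑' j, lam j * cnt (Wf j).aedge (x, y))
      = ∑' j, lam j * ∑' y, cnt (Wf j).aedge (x, y) := by
    intro x
    have hslice : ∀ j, Summable (fun y => lam j * cnt (Wf j).aedge (x, y)) :=
      fun j => (summable_cnt_row _ x).mul_left (lam j)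
    have hmarg : Summable (fun j => ∑' y, lam j * cnt (Wf j).aedge (x, y)) := by
      refine Summable.of_nonneg_of_le (fun j => tsum_nonneg (fun y => htermA_nonneg _ j))
        (fun j => ?_) hlamnsum
      rw [tsum_mul_left]
      exact mul_le_mul_of_nonneg_left (hrowcnt_bdd j x) (hlam0 j)
    have huncurry : Summable (Function.uncurry (fun j y => lam j * cnt (Wf j).aedge (x, y))) := by
      refine (summable_prod_of_nonneg ?_).mpr ⟨hslice, hmarg⟩
      intro p; exact htermA_nonneg _ _
    have hcomm := Summable.tsum_comm' huncurry (fun j => hslice j)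
      (fun y => (hsumA (x, y)))
    rw [hcomm]
    exact tsum_congr (fun j => tsum_mul_left)
  have hswapB : ∀ x, ∑' y, (∑' j, lam j * cnt (Wf j).bedge (x, y))
      = ∑' j, lam j * ∑' y, cnt (Wf j).bedge (x, y) := by
    intro x
    have hslice : ∀ j, Summable (fun y => lam j * cnt (Wf j).bedge (x, y)) :=
      fun j => (summable_cnt_row _ x).mul_left (lam j)
    have hmarg : Summable (fun j => ∑' y, lam j * cnt (Wf j).bedge (x, y)) := by
      refine Summable.of_nonneg_of_le (fun j => tsum_nonneg (fun y => htermB_nonneg _ j))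
        (fun j => ?_) hlamnsum
      rw [tsum_mul_left]
      refine mul_le_mul_of_nonneg_left ?_ (hlam0 j)
      rw [← walk_row_eq]
      exact hrowcnt_bdd j x
    have huncurry : Summable (Function.uncurry (fun j y => lam j * cnt (Wf j).bedge (x, y))) := by
      refine (summable_prod_of_nonneg ?_).mpr ⟨hslice, hmarg⟩
      intro p; exact htermB_nonneg _ _
    have hcomm := Summable.tsum_comm' huncurry (fun j => hslice j)
      (fun y => (hsumB (x, y)))
    rw [hcomm]
    exact tsum_congr (fun j => tsum_mul_left)
  have hrow_Inf : ∀ x, ∑' y, aInf (x, y) = ∑' y, bInf (x, y) := by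
    intro x
    have hsSA : Summable (fun y => ∑' j, lam j * cnt (Wf j).aedge (x, y)) :=
      Summable.of_nonneg_of_le (fun y => tsum_nonneg (fun j => htermA_nonneg _ j))
        (fun y => hSA_le_a (x, y)) (hsa.prod_factor x)
    have hsSB : Summable (fun y => ∑' j, lam j * cnt (Wf j).bedge (x, y)) :=
      Summable.of_nonneg_of_le (fun y => tsum_nonneg (fun j => htermB_nonneg _ j))
        (fun y => hSB_le_b (x, y)) (hsb.prod_factor x)
    calc ∑' y, aInf (x, y)
        = ∑' y, a (x, y) - ∑' y, (∑' j, lam j * cnt (Wf j).aedge (x, y)) :=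
          Summable.tsum_sub (hsa.prod_factor x) hsSA
      _ = ∑' y, b (x, y) - ∑' y, (∑' j, lam j * cnt (Wf j).bedge (x, y)) := by
          rw [hrow x, hswapA, hswapB]
          congr 1
          exact tsum_congr (fun j => by rw [walk_row_eq])
      _ = ∑' y, bInf (x, y) := (Summable.tsum_sub (hsb.prod_factor x) hsSB).symm
  -- column versions
  have hcolcnt_bdd : ∀ (j : ℕ) (y : X₂),
      ∑' x, cnt (Wf j).aedge (x, y) ≤ ((Wf j).n + 1 : ℝ) := by
    intro j y
    rw [tsum_cnt_col]
    calc ∑ i, (if ((Wf j).aedge i).2 = y then (1:ℝ) else 0)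
        ≤ ∑ _i : Fin ((Wf j).n + 1), (1:ℝ) :=
          Finset.sum_le_sum (fun i _ => by split <;> norm_num)
      _ = ((Wf j).n + 1 : ℝ) := by simp
  have hswapA' : ∀ y, ∑' x, (∑' j, lam j * cnt (Wf j).aedge (x, y))
      = ∑' j, lam j * ∑' x, cnt (Wf j).aedge (x, y) := by
    intro y
    have hslice : ∀ j, Summable (fun x => lam j * cnt (Wf j).aedge (x, y)) :=
      fun j => (summable_cnt_col _ y).mul_left (lam j)
    have hmarg : Summable (fun j => ∑' x, lam j * cnt (Wf j).aedge (x, y)) := by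
      refine Summable.of_nonneg_of_le (fun j => tsum_nonneg (fun x => htermA_nonneg _ j))
        (fun j => ?_) hlamnsum
      rw [tsum_mul_left]
      exact mul_le_mul_of_nonneg_left (hcolcnt_bdd j y) (hlam0 j)
    have huncurry : Summable (Function.uncurry (fun j x => lam j * cnt (Wf j).aedge (x, y))) := by
      refine (summable_prod_of_nonneg ?_).mpr ⟨hslice, hmarg⟩
      intro p; exact htermA_nonneg _ _
    have hcomm := Summable.tsum_comm' huncurry (fun j => hslice j)
      (fun x => (hsumA (x, y)))
    rw [hcomm]
    exact tsum_congr (fun j => tsum_mul_left)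
  have hswapB' : ∀ y, ∑' x, (∑' j, lam j * cnt (Wf j).bedge (x, y))
      = ∑' j, lam j * ∑' x, cnt (Wf j).bedge (x, y) := by
    intro y
    have hslice : ∀ j, Summable (fun x => lam j * cnt (Wf j).bedge (x, y)) :=
      fun j => (summable_cnt_col _ y).mul_left (lam j)
    have hmarg : Summable (fun j => ∑' x, lam j * cnt (Wf j).bedge (x, y)) := by
      refine Summable.of_nonneg_of_le (fun j => tsum_nonneg (fun x => htermB_nonneg _ j))
        (fun j => ?_) hlamnsum
      rw [tsum_mul_left]
      refine mul_le_mul_of_nonneg_left ?_ (hlam0 j)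
      rw [← walk_col_eq]
      exact hcolcnt_bdd j y
    have huncurry : Summable (Function.uncurry (fun j x => lam j * cnt (Wf j).bedge (x, y))) := by
      refine (summable_prod_of_nonneg ?_).mpr ⟨hslice, hmarg⟩
      intro p; exact htermB_nonneg _ _
    have hcomm := Summable.tsum_comm' huncurry (fun j => hslice j)
      (fun x => (hsumB (x, y)))
    rw [hcomm]
    exact tsum_congr (fun j => tsum_mul_left)
  have hcol_Inf : ∀ y, ∑' x, aInf (x, y) = ∑' x, bInf (x, y) := by
    intro y
    have hsSA : Summable (fun x => ∑' j, lam j * cnt (Wf j).aedge (x, y)) :=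
      Summable.of_nonneg_of_le (fun x => tsum_nonneg (fun j => htermA_nonneg _ j))
        (fun x => hSA_le_a (x, y)) (hsa.prod_symm.prod_factor y)
    have hsSB : Summable (fun x => ∑' j, lam j * cnt (Wf j).bedge (x, y)) :=
      Summable.of_nonneg_of_le (fun x => tsum_nonneg (fun j => htermB_nonneg _ j))
        (fun x => hSB_le_b (x, y)) (hsb.prod_symm.prod_factor y)
    calc ∑' x, aInf (x, y)
        = ∑' x, a (x, y) - ∑' x, (∑' j, lam j * cnt (Wf j).aedge (x, y)) :=
          Summable.tsum_sub (hsa.prod_symm.prod_factor y) hsSA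
      _ = ∑' x, b (x, y) - ∑' x, (∑' j, lam j * cnt (Wf j).bedge (x, y)) := by
          rw [hcol y, hswapA', hswapB']
          congr 1
          exact tsum_congr (fun j => by rw [walk_col_eq])
      _ = ∑' x, bInf (x, y) := (Summable.tsum_sub (hsb.prod_symm.prod_factor y) hsSB).symm
  -- the residual flow is zero
  have hbInf0 : ∀ z, bInf z = 0 := by
    by_contra hcon
    push_neg at hcon
    obtain ⟨z₀, hz₀⟩ := hcon
    have hz₀' : 0 < bInf z₀ := lt_of_le_of_ne (hbInf_nonneg z₀) (Ne.symm hz₀)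
    have hrowE : ∀ x, ∑' y, ENNReal.ofReal (aInf (x, y)) = ∑' y, ENNReal.ofReal (bInf (x, y)) := by
      intro x
      rw [← ENNReal.ofReal_tsum_of_nonneg (fun y => haInf_nonneg (x, y)) (hsaInf.prod_factor x),
        ← ENNReal.ofReal_tsum_of_nonneg (fun y => hbInf_nonneg (x, y)) (hsbInf.prod_factor x),
        hrow_Inf x]
    have hcolE : ∀ y, ∑' x, ENNReal.ofReal (aInf (x, y)) = ∑' x, ENNReal.ofReal (bInf (x, y)) := by
      intro y
      rw [← ENNReal.ofReal_tsum_of_nonneg (fun x => haInf_nonneg (x, y))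
          (hsaInf.prod_symm.prod_factor y),
        ← ENNReal.ofReal_tsum_of_nonneg (fun x => hbInf_nonneg (x, y))
          (hsbInf.prod_symm.prod_factor y),
        hcol_Inf y]
    have hbfinE : ∑' z, ENNReal.ofReal (bInf z) ≠ ⊤ := by
      rw [← ENNReal.ofReal_tsum_of_nonneg hbInf_nonneg hsbInf]
      exact ENNReal.ofReal_ne_top
    have hz₀E : ENNReal.ofReal (bInf z₀) ≠ 0 := by
      rw [← ENNReal.ofReal_zero]
      intro h
      have := ENNReal.ofReal_eq_zero.mp (by rw [ENNReal.ofReal_zero] at h; exact h)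
      linarith
    obtain ⟨n, xs, ys, hAe, hBe⟩ := cycle_exists (fun z => ENNReal.ofReal (aInf z))
      (fun z => ENNReal.ofReal (bInf z)) hrowE hcolE hbfinE hz₀E
    set Wstar : Wk X₁ X₂ := ⟨n, xs, ys⟩ with hWstar
    have haPos : ∀ i, 0 < aInf (Wstar.aedge i) := by
      intro i
      have := hAe i
      rcases lt_or_ge 0 (aInf (Wstar.aedge i)) with h | h
      · exact h
      · exact absurd (ENNReal.ofReal_eq_zero.mpr h) this
    have hbPos : ∀ i, 0 < bInf (Wstar.bedge i) := by
      intro i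
      have := hBe i
      rcases lt_or_ge 0 (bInf (Wstar.bedge i)) with h | h
      · exact h
      · exact absurd (ENNReal.ofReal_eq_zero.mpr h) this
    set eps : ℝ := Finset.univ.inf' Finset.univ_nonempty
      (fun i : Fin (n+1) => min (aInf (Wstar.aedge i)) (bInf (Wstar.bedge i))) with heps
    have hepspos : 0 < eps := by
      rw [heps, Finset.lt_inf'_iff]
      exact fun i _ => lt_min (haPos i) (hbPos i)
    set tstar : ℝ := eps / (n + 1) with htstar
    have htpos : 0 < tstar := div_pos hepspos (by positivity)
    have hfeas : ∀ k, Feas (P k) tstar Wstar := by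
      intro k z
      have hcard : (Fintype.card (Fin (n+1)) : ℝ) = (n+1 : ℝ) := by simp
      constructor
      · by_cases hz : ∃ i, Wstar.aedge i = z
        · obtain ⟨i, hi⟩ := hz
          have h1 : tstar * cnt Wstar.aedge z ≤ tstar * (n+1 : ℝ) := by
            refine mul_le_mul_of_nonneg_left ?_ htpos.le
            have := cnt_le_card Wstar.aedge z
            rwa [hcard] at this
          have h2 : tstar * (n+1 : ℝ) = eps := by
            rw [htstar]; field_simp
          have h3 : eps ≤ aInf z := by
            rw [← hi, heps]
            exact le_trans (Finset.inf'_le _ (Finset.mem_univ i)) (min_le_left _ _)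
          calc tstar * cnt Wstar.aedge z ≤ eps := by rw [← h2]; exact h1
            _ ≤ aInf z := h3
            _ ≤ (P k).1 z := haInf_le k z
        · push_neg at hz
          rw [cnt_eq_zero_of_ne _ hz, mul_zero]
          exact (good k).1 z
      · by_cases hz : ∃ i, Wstar.bedge i = z
        · obtain ⟨i, hi⟩ := hz
          have h1 : tstar * cnt Wstar.bedge z ≤ tstar * (n+1 : ℝ) := by
            refine mul_le_mul_of_nonneg_left ?_ htpos.le
            have := cnt_le_card Wstar.bedge z
            rwa [hcard] at this
          have h2 : tstar * (n+1 : ℝ) = eps := by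
            rw [htstar]; field_simp
          have h3 : eps ≤ bInf z := by
            rw [← hi, heps]
            exact le_trans (Finset.inf'_le _ (Finset.mem_univ i)) (min_le_right _ _)
          calc tstar * cnt Wstar.bedge z ≤ eps := by rw [← h2]; exact h1
            _ ≤ bInf z := h3
            _ ≤ (P k).2 z := hbInf_le k z
        · push_neg at hz
          rw [cnt_eq_zero_of_ne _ hz, mul_zero]
          exact (good k).2.1 z
    have hmem : ∀ k, tstar ∈ lamSet (P k) := fun k => ⟨htpos, Wstar, hfeas k⟩
    have hbdd : ∀ k, BddAbove (lamSet (P k)) := by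
      intro k
      refine ⟨∑' z, b z, fun t ht => ?_⟩
      obtain ⟨htpos', W, hf⟩ := ht
      have h1 : (1:ℝ) ≤ cnt W.bedge (W.bedge 0) := cnt_pos_of_eq W.bedge 0
      calc t = t * 1 := (mul_one t).symm
        _ ≤ t * cnt W.bedge (W.bedge 0) := mul_le_mul_of_nonneg_left h1 htpos'.le
        _ ≤ (P k).2 (W.bedge 0) := (hf (W.bedge 0)).2
        _ ≤ b (W.bedge 0) := (good k).2.2.2.1 _
        _ ≤ ∑' z, b z := Summable.le_tsum hsb _ (fun _ _ => hb0 _)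
    have hlamlb : ∀ k, tstar / 2 ≤ lam k := by
      intro k
      have hspec := pick_spec (P k) ⟨tstar, hmem k⟩ (hbdd k)
      have h1 : tstar ≤ sSup (lamSet (P k)) := le_csSup (hbdd k) (hmem k)
      have h2 := hspec.2
      rw [hlamdef k]
      linarith
    have : tstar / 2 ≤ 0 := ge_of_tendsto hlamtend (Filter.Eventually.of_forall hlamlb)
    linarith
  have haInf0 : ∀ z, aInf z = 0 := by
    have htotal : ∑' z, aInf z = 0 := by
      rw [Summable.tsum_prod hsaInf]
      rw [show ∑' x, ∑' y, aInf (x, y) = ∑' x, ∑' y, bInf (x, y) from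
        tsum_congr (fun x => hrow_Inf x)]
      rw [← Summable.tsum_prod hsbInf]
      rw [show ∑' z, bInf z = ∑' z, (0:ℝ) from tsum_congr hbInf0]
      exact tsum_zero
    intro z
    have h1 : aInf z ≤ ∑' w, aInf w := Summable.le_tsum hsaInf z (fun _ _ => haInf_nonneg _)
    have h2 := haInf_nonneg z
    rw [htotal] at h1
    linarith
  have haSA : ∀ z, a z = ∑' j, lam j * cnt (Wf j).aedge z := by
    intro z
    have := haInf0 z
    simp only [haInf] at this
    linarith
  have hbSB : ∀ z, b z = ∑' j, lam j * cnt (Wf j).bedge z := by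
    intro z
    have := hbInf0 z
    simp only [hbInf] at this
    linarith
  -- cost bookkeeping
  set cA : ℕ → ℝ := fun j => ∑ i, r ((Wf j).aedge i) with hcA
  set cB : ℕ → ℝ := fun j => ∑ i, r ((Wf j).bedge i) with hcB
  set gA : ℕ → ℝ := fun j => ∑ i, |r ((Wf j).aedge i)| with hgA
  set gB : ℕ → ℝ := fun j => ∑ i, |r ((Wf j).bedge i)| with hgB
  have habsA : Summable (fun p : (X₁ × X₂) × ℕ => |r p.1| * (lam p.2 * cnt (Wf p.2).aedge p.1)) := by
    refine (summable_prod_of_nonneg (fun p => mul_nonneg (abs_nonneg _) (htermA_nonneg _ _))).mpr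
      ⟨fun z => (hsumA z).mul_left (|r z|), ?_⟩
    refine Summable.of_nonneg_of_le (fun z => tsum_nonneg
      (fun j => mul_nonneg (abs_nonneg _) (htermA_nonneg _ _))) (fun z => ?_) hra
    have hbeta : ∀ j : ℕ, (fun p : (X₁ × X₂) × ℕ => |r p.1| * (lam p.2 * cnt (Wf p.2).aedge p.1)) (z, j)
        = |r z| * (lam j * cnt (Wf j).aedge z) := fun j => rfl
    rw [tsum_congr hbeta, tsum_mul_left]
    exact mul_le_mul_of_nonneg_left (hSA_le_a z) (abs_nonneg _)
  have habsB : Summable (fun p : (X₁ × X₂) × ℕ => |r p.1| * (lam p.2 * cnt (Wf p.2).bedge p.1)) := by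
    refine (summable_prod_of_nonneg (fun p => mul_nonneg (abs_nonneg _) (htermB_nonneg _ _))).mpr
      ⟨fun z => (hsumB z).mul_left (|r z|), ?_⟩
    refine Summable.of_nonneg_of_le (fun z => tsum_nonneg
      (fun j => mul_nonneg (abs_nonneg _) (htermB_nonneg _ _))) (fun z => ?_) hrb
    have hbeta : ∀ j : ℕ, (fun p : (X₁ × X₂) × ℕ => |r p.1| * (lam p.2 * cnt (Wf p.2).bedge p.1)) (z, j)
        = |r z| * (lam j * cnt (Wf j).bedge z) := fun j => rfl
    rw [tsum_congr hbeta, tsum_mul_left]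
    exact mul_le_mul_of_nonneg_left (hSB_le_b z) (abs_nonneg _)
  have habsA' : Summable (fun p : ℕ × (X₁ × X₂) => |r p.2| * (lam p.1 * cnt (Wf p.1).aedge p.2)) :=
    habsA.prod_symm
  have habsB' : Summable (fun p : ℕ × (X₁ × X₂) => |r p.2| * (lam p.1 * cnt (Wf p.1).bedge p.2)) :=
    habsB.prod_symm
  have hinnerA : ∀ j, ∑' z, |r z| * (lam j * cnt (Wf j).aedge z) = lam j * gA j := by
    intro j
    have h1 : (fun z => |r z| * (lam j * cnt (Wf j).aedge z))
        = fun z => lam j * (|r z| * cnt (Wf j).aedge z) := funext (fun z => by ring)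
    rw [h1, tsum_mul_left, tsum_mul_cnt]
  have hinnerB : ∀ j, ∑' z, |r z| * (lam j * cnt (Wf j).bedge z) = lam j * gB j := by
    intro j
    have h1 : (fun z => |r z| * (lam j * cnt (Wf j).bedge z))
        = fun z => lam j * (|r z| * cnt (Wf j).bedge z) := funext (fun z => by ring)
    rw [h1, tsum_mul_left, tsum_mul_cnt]
  have hgAsum : Summable (fun j => lam j * gA j) := by
    have := ((summable_prod_of_nonneg (fun p : ℕ × (X₁ × X₂) =>
      mul_nonneg (abs_nonneg _) (htermA_nonneg _ _))).mp habsA').2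
    simpa only [hinnerA] using this
  have hgBsum : Summable (fun j => lam j * gB j) := by
    have := ((summable_prod_of_nonneg (fun p : ℕ × (X₁ × X₂) =>
      mul_nonneg (abs_nonneg _) (htermB_nonneg _ _))).mp habsB').2
    simpa only [hinnerB] using this
  have hcAsum : Summable (fun j => lam j * cA j) := by
    refine Summable.of_norm_bounded hgAsum (fun j => ?_)
    rw [Real.norm_eq_abs, abs_mul, abs_of_nonneg (hlam0 j)]
    exact mul_le_mul_of_nonneg_left (Finset.abs_sum_le_sum_abs _ _) (hlam0 j)
  have hcBsum : Summable (fun j => lam j * cB j) := by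
    refine Summable.of_norm_bounded hgBsum (fun j => ?_)
    rw [Real.norm_eq_abs, abs_mul, abs_of_nonneg (hlam0 j)]
    exact mul_le_mul_of_nonneg_left (Finset.abs_sum_le_sum_abs _ _) (hlam0 j)
  -- cost identities
  have hcostA : ∑' z, r z * a z = ∑' j, lam j * cA j := by
    have huncA : Summable (Function.uncurry (fun (j : ℕ) (z : X₁ × X₂) =>
        r z * (lam j * cnt (Wf j).aedge z))) := by
      refine Summable.of_abs ?_
      have h1 : (fun p : ℕ × (X₁ × X₂) => |r p.2 * (lam p.1 * cnt (Wf p.1).aedge p.2)|)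
          = fun p => |r p.2| * (lam p.1 * cnt (Wf p.1).aedge p.2) := by
        funext p
        rw [abs_mul, abs_of_nonneg (htermA_nonneg _ _)]
      exact h1 ▸ habsA'
    calc ∑' z, r z * a z = ∑' z, ∑' j, r z * (lam j * cnt (Wf j).aedge z) := by
          refine tsum_congr (fun z => ?_)
          rw [haSA z]
          exact (tsum_mul_left).symm
      _ = ∑' j, ∑' z, r z * (lam j * cnt (Wf j).aedge z) :=
          (Summable.tsum_comm' huncA
            (fun j => by
              have h1 : (fun z => r z * (lam j * cnt (Wf j).aedge z))
                  = fun z => lam j * (r z * cnt (Wf j).aedge z) := funext (fun z => by ring)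
              rw [h1]; exact (summable_mul_cnt _ r).mul_left (lam j))
            (fun z => (hsumA z).mul_left (r z)))
      _ = ∑' j, lam j * cA j := by
          refine tsum_congr (fun j => ?_)
          have h1 : (fun z => r z * (lam j * cnt (Wf j).aedge z))
              = fun z => lam j * (r z * cnt (Wf j).aedge z) := funext (fun z => by ring)
          rw [h1, tsum_mul_left, tsum_mul_cnt]
  have hcostB : ∑' z, r z * b z = ∑' j, lam j * cB j := by
    have huncB : Summable (Function.uncurry (fun (j : ℕ) (z : X₁ × X₂) =>
        r z * (lam j * cnt (Wf j).bedge z))) := by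
      refine Summable.of_abs ?_
      have h1 : (fun p : ℕ × (X₁ × X₂) => |r p.2 * (lam p.1 * cnt (Wf p.1).bedge p.2)|)
          = fun p => |r p.2| * (lam p.1 * cnt (Wf p.1).bedge p.2) := by
        funext p
        rw [abs_mul, abs_of_nonneg (htermB_nonneg _ _)]
      exact h1 ▸ habsB'
    calc ∑' z, r z * b z = ∑' z, ∑' j, r z * (lam j * cnt (Wf j).bedge z) := by
          refine tsum_congr (fun z => ?_)
          rw [hbSB z]
          exact (tsum_mul_left).symm
      _ = ∑' j, ∑' z, r z * (lam j * cnt (Wf j).bedge z) :=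
          (Summable.tsum_comm' huncB
            (fun j => by
              have h1 : (fun z => r z * (lam j * cnt (Wf j).bedge z))
                  = fun z => lam j * (r z * cnt (Wf j).bedge z) := funext (fun z => by ring)
              rw [h1]; exact (summable_mul_cnt _ r).mul_left (lam j))
            (fun z => (hsumB z).mul_left (r z)))
      _ = ∑' j, lam j * cB j := by
          refine tsum_congr (fun j => ?_)
          have h1 : (fun z => r z * (lam j * cnt (Wf j).bedge z))
              = fun z => lam j * (r z * cnt (Wf j).bedge z) := funext (fun z => by ring)
          rw [h1, tsum_mul_left, tsum_mul_cnt]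
  -- termwise comparison via cyclical monotonicity
  have hterm : ∀ j, lam j * cA j ≤ lam j * cB j := by
    intro j
    rcases eq_or_lt_of_le (hlam0 j) with h | h
    · rw [← h, zero_mul, zero_mul]
    · refine mul_le_mul_of_nonneg_left ?_ (hlam0 j)
      have feas : Feas (P j) (lam j) (Wf j) := by
        rw [hlamdef j, hWfdef j]; exact pick_feas (P j) (good j).1 (good j).2.1
      refine hm (Wf j) (fun i => ?_) (fun i => ?_)
      · have h1 : (1:ℝ) ≤ cnt (Wf j).aedge ((Wf j).aedge i) := cnt_pos_of_eq _ i
        have h2 : lam j * 1 ≤ lam j * cnt (Wf j).aedge ((Wf j).aedge i) :=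
          mul_le_mul_of_nonneg_left h1 (hlam0 j)
        have h3 := (feas ((Wf j).aedge i)).1
        have h4 := (good j).2.2.1 ((Wf j).aedge i)
        rw [mul_one] at h2
        linarith
      · have h1 : (1:ℝ) ≤ cnt (Wf j).bedge ((Wf j).bedge i) := cnt_pos_of_eq _ i
        have h2 : lam j * 1 ≤ lam j * cnt (Wf j).bedge ((Wf j).bedge i) :=
          mul_le_mul_of_nonneg_left h1 (hlam0 j)
        have h3 := (feas ((Wf j).bedge i)).2
        have h4 := (good j).2.2.2.1 ((Wf j).bedge i)
        rw [mul_one] at h2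
        linarith
  rw [hcostA, hcostB]
  exact Summable.tsum_le_tsum hterm hcAsum hcBsum


lemma ecoe_sum {ι : Type*} (s : Finset ι) (f : ι → ℝ) :
    ((∑ i ∈ s, f i : ℝ) : EReal) = ∑ i ∈ s, ((f i : ℝ) : EReal) := by
  induction s using Finset.cons_induction with
  | empty => simp
  | cons a s ha ih => rw [Finset.sum_cons, Finset.sum_cons, EReal.coe_add, ih]

section Meas

variable {X₁ X₂ : Type*} [Countable X₁] [Countable X₂]
  [MeasurableSpace X₁] [MeasurableSingletonClass X₁]
  [MeasurableSpace X₂] [MeasurableSingletonClass X₂]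

lemma measure_fst_fiber (γ : Measure (X₁ × X₂)) (x : X₁) :
    γ (Prod.fst ⁻¹' {x}) = ∑' y, γ {(x, y)} := by
  have h1 : Prod.fst ⁻¹' {x} = ⋃ y : X₂, ({(x, y)} : Set (X₁ × X₂)) := by
    ext p
    simp only [Set.mem_preimage, Set.mem_singleton_iff, Set.mem_iUnion]
    constructor
    · intro h; exact ⟨p.2, by rw [Prod.ext_iff]; exact ⟨h, rfl⟩⟩
    · rintro ⟨y, rfl⟩; rfl
  rw [h1, measure_iUnion ?_ (fun y => measurableSet_singleton _)]
  intro y y' hyy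
  simp only [Function.onFun, Set.disjoint_singleton, ne_eq, Prod.mk.injEq]
  exact fun h => hyy h.2

lemma measure_snd_fiber (γ : Measure (X₁ × X₂)) (y : X₂) :
    γ (Prod.snd ⁻¹' {y}) = ∑' x, γ {(x, y)} := by
  have h1 : Prod.snd ⁻¹' {y} = ⋃ x : X₁, ({(x, y)} : Set (X₁ × X₂)) := by
    ext p
    simp only [Set.mem_preimage, Set.mem_singleton_iff, Set.mem_iUnion]
    constructor
    · intro h; exact ⟨p.1, by rw [Prod.ext_iff]; exact ⟨rfl, h⟩⟩
    · rintro ⟨x, rfl⟩; rfl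
  rw [h1, measure_iUnion ?_ (fun x => measurableSet_singleton _)]
  intro x x' hxx
  simp only [Function.onFun, Set.disjoint_singleton, ne_eq, Prod.mk.injEq]
  exact fun h => hxx h.1

lemma measure_univ_tsum (γ : Measure (X₁ × X₂)) :
    γ Set.univ = ∑' z : X₁ × X₂, γ {z} := by
  rw [show (Set.univ : Set (X₁ × X₂)) = ⋃ z : X₁ × X₂, {z} from (Set.iUnion_of_singleton _).symm,
    measure_iUnion ?_ (fun z => measurableSet_singleton _)]
  intro z z' hzz
  simp only [Function.onFun, Set.disjoint_singleton, ne_eq]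
  exact hzz

/-- representation of a finite cost as a real series over atoms -/
lemma ecost_repr (c : X₁ × X₂ → EReal) (γ : Measure (X₁ × X₂)) [IsProbabilityMeasure γ]
    (hT : ecost c γ ≠ ⊤) (hB : ecost c γ ≠ ⊥) :
    (∀ z, γ {z} ≠ 0 → (c z ≠ ⊤ ∧ c z ≠ ⊥)) ∧
    Summable (fun z => |(c z).toReal| * (γ {z}).toReal) ∧
    ecost c γ = ((∑' z, (c z).toReal * (γ {z}).toReal : ℝ) : EReal) := by
  set P := ∫⁻ z, erealPos (c z) ∂γ with hP
  set N := ∫⁻ z, erealPos (-(c z)) ∂γ with hN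
  have hecost : ecost c γ = ((P : EReal) - (N : EReal)) := rfl
  have hPsum : P = ∑' z, erealPos (c z) * γ {z} := lintegral_countable' _
  have hNsum : N = ∑' z, erealPos (-(c z)) * γ {z} := lintegral_countable' _
  have hPfin : P ≠ ⊤ := by
    intro h
    rw [hecost, h, EReal.coe_ennreal_top] at hT hB
    by_cases hN' : N = ⊤
    · rw [hN', EReal.coe_ennreal_top] at hB
      exact hB (by rw [sub_eq_add_neg, EReal.neg_top, EReal.add_bot])
    · refine hT ?_
      rw [sub_eq_add_neg, EReal.top_add_of_ne_bot]
      rw [ne_eq, EReal.neg_eq_bot_iff]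
      exact fun h2 => hN' (EReal.coe_ennreal_eq_top_iff.mp h2)
  have hNfin : N ≠ ⊤ := by
    intro h
    rw [hecost, h, EReal.coe_ennreal_top] at hB
    exact hB (by rw [sub_eq_add_neg, EReal.neg_top, EReal.add_bot])
  have hatom : ∀ z, γ {z} ≠ 0 → (c z ≠ ⊤ ∧ c z ≠ ⊥) := by
    intro z hz
    constructor
    · intro hcz
      apply hPfin
      rw [hPsum]
      refine top_le_iff.mp ?_
      have hle : erealPos (c z) * γ {z} ≤ ∑' w, erealPos (c w) * γ {w} := ENNReal.le_tsum z
      rw [hcz] at hle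
      rw [show erealPos ⊤ = ⊤ from if_pos rfl, ENNReal.top_mul hz] at hle
      exact hle
    · intro hcz
      apply hNfin
      rw [hNsum]
      refine top_le_iff.mp ?_
      have hle : erealPos (-(c z)) * γ {z} ≤ ∑' w, erealPos (-(c w)) * γ {w} := ENNReal.le_tsum z
      rw [hcz] at hle
      rw [show erealPos (-(⊥ : EReal)) = ⊤ by rw [EReal.neg_bot]; exact if_pos rfl,
        ENNReal.top_mul hz] at hle
      exact hle
  have hPsum' : P = ∑' z, ENNReal.ofReal ((c z).toReal) * γ {z} := by
    rw [hPsum]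
    refine tsum_congr (fun z => ?_)
    by_cases hz : γ {z} = 0
    · rw [hz, mul_zero, mul_zero]
    · rw [show erealPos (c z) = ENNReal.ofReal ((c z).toReal) from if_neg (hatom z hz).1]
  have hNsum' : N = ∑' z, ENNReal.ofReal (-(c z).toReal) * γ {z} := by
    rw [hNsum]
    refine tsum_congr (fun z => ?_)
    by_cases hz : γ {z} = 0
    · rw [hz, mul_zero, mul_zero]
    · have h1 : -(c z) ≠ ⊤ := by
        rw [ne_eq, EReal.neg_eq_top_iff]; exact (hatom z hz).2
      rw [show erealPos (-(c z)) = ENNReal.ofReal ((-(c z)).toReal) from if_neg h1,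
        EReal.toReal_neg_eq]
  have htermP_ne : ∀ z, ENNReal.ofReal ((c z).toReal) * γ {z} ≠ ⊤ := fun z =>
    ENNReal.mul_ne_top ENNReal.ofReal_ne_top (measure_ne_top γ _)
  have htermN_ne : ∀ z, ENNReal.ofReal (-(c z).toReal) * γ {z} ≠ ⊤ := fun z =>
    ENNReal.mul_ne_top ENNReal.ofReal_ne_top (measure_ne_top γ _)
  have hPto : P.toReal = ∑' z, max ((c z).toReal) 0 * (γ {z}).toReal := by
    rw [hPsum', ENNReal.tsum_toReal_eq htermP_ne]
    exact tsum_congr (fun z => by rw [ENNReal.toReal_mul, ENNReal.toReal_ofReal'])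
  have hNto : N.toReal = ∑' z, max (-(c z).toReal) 0 * (γ {z}).toReal := by
    rw [hNsum', ENNReal.tsum_toReal_eq htermN_ne]
    exact tsum_congr (fun z => by rw [ENNReal.toReal_mul, ENNReal.toReal_ofReal'])
  have hsp : Summable (fun z => max ((c z).toReal) 0 * (γ {z}).toReal) := by
    have := ENNReal.summable_toReal (by rw [← hPsum']; exact hPfin)
    refine this.congr (fun z => ?_)
    rw [ENNReal.toReal_mul, ENNReal.toReal_ofReal']
  have hsn : Summable (fun z => max (-(c z).toReal) 0 * (γ {z}).toReal) := by
    have := ENNReal.summable_toReal (by rw [← hNsum']; exact hNfin)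
    refine this.congr (fun z => ?_)
    rw [ENNReal.toReal_mul, ENNReal.toReal_ofReal']
  have habs : ∀ z, |(c z).toReal| * (γ {z}).toReal
      = max ((c z).toReal) 0 * (γ {z}).toReal + max (-(c z).toReal) 0 * (γ {z}).toReal := by
    intro z
    rcases le_total 0 ((c z).toReal) with h | h
    · rw [abs_of_nonneg h, max_eq_left h, max_eq_right (by linarith)]; ring
    · rw [abs_of_nonpos h, max_eq_right h, max_eq_left (by linarith)]; ring
  have hsabs : Summable (fun z => |(c z).toReal| * (γ {z}).toReal) := by
    refine Summable.congr (hsp.add hsn) (fun z => (habs z).symm)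
  have hpt : ∀ z, (c z).toReal * (γ {z}).toReal
      = max ((c z).toReal) 0 * (γ {z}).toReal - max (-(c z).toReal) 0 * (γ {z}).toReal := by
    intro z
    rcases le_total 0 ((c z).toReal) with h | h
    · rw [max_eq_left h, max_eq_right (by linarith)]; ring
    · rw [max_eq_right h, max_eq_left (by linarith)]; ring
  have htsum : ∑' z, (c z).toReal * (γ {z}).toReal = P.toReal - N.toReal := by
    rw [hPto, hNto, ← Summable.tsum_sub hsp hsn]
    exact tsum_congr hpt
  refine ⟨hatom, hsabs, ?_⟩
  have hPcoe : (P : EReal) = ((P.toReal : ℝ) : EReal) := by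
    rw [← EReal.toReal_coe_ennreal (x := P)]
    exact (EReal.coe_toReal (by rwa [ne_eq, EReal.coe_ennreal_eq_top_iff])
      (EReal.coe_ennreal_ne_bot _)).symm
  have hNcoe : (N : EReal) = ((N.toReal : ℝ) : EReal) := by
    rw [← EReal.toReal_coe_ennreal (x := N)]
    exact (EReal.coe_toReal (by rwa [ne_eq, EReal.coe_ennreal_eq_top_iff])
      (EReal.coe_ennreal_ne_bot _)).symm
  rw [hecost, hPcoe, hNcoe, htsum, ← EReal.coe_sub]

end Meas


end OT15

theorem stmt15 (X₁ X₂ : Type*) [Countable X₁] [Countable X₂]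
    [MeasurableSpace X₁] [MeasurableSingletonClass X₁]
    [MeasurableSpace X₂] [MeasurableSingletonClass X₂]
    (c : X₁ × X₂ → EReal)
    (γ : Measure (X₁ × X₂)) [IsProbabilityMeasure γ]
    (hfin : ecost c γ ≠ ⊤) (hfin' : ecost c γ ≠ ⊥)
    -- the support (set of atoms) of γ is c-cyclically monotone:
    (hmono : ∀ (ℓ : ℕ) (σ₁ σ₂ : Equiv.Perm (Fin ℓ)) (x : Fin ℓ → X₁) (y : Fin ℓ → X₂),
      (∀ j, γ {(x j, y j)} ≠ 0) →
      ∑ j, c (x j, y j) ≤ ∑ j, c (x (σ₁ j), y (σ₂ j))) :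
    ∀ γbar : Measure (X₁ × X₂), IsProbabilityMeasure γbar →
      (Measure.map Prod.fst γbar = Measure.map Prod.fst γ) →
      (Measure.map Prod.snd γbar = Measure.map Prod.snd γ) →
      ecost c γbar ≠ ⊤ → ecost c γbar ≠ ⊥ →
      ecost c γ ≤ ecost c γbar := by
  intro γbar hprob hfst hsnd hT' hB'
  haveI := hprob
  obtain ⟨hatomγ, hsumγ, hecγ⟩ := OT15.ecost_repr c γ hfin hfin'
  obtain ⟨hatomγb, hsumγb, hecγb⟩ := OT15.ecost_repr c γbar hT' hB'
  rw [hecγ, hecγb, EReal.coe_le_coe_iff]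
  refine OT15.core (fun z => (γ {z}).toReal) (fun z => (γbar {z}).toReal)
    (fun z => (c z).toReal)
    (fun z => ENNReal.toReal_nonneg) (fun z => ENNReal.toReal_nonneg)
    ?_ ?_ hsumγ hsumγb ?_ ?_ ?_
  · exact ENNReal.summable_toReal (by rw [← OT15.measure_univ_tsum]; exact measure_ne_top γ _)
  · exact ENNReal.summable_toReal (by rw [← OT15.measure_univ_tsum]; exact measure_ne_top γbar _)
  · -- rows
    intro x
    have h1 : (∑' y, γ {(x, y)}) = ∑' y, γbar {(x, y)} := by
      rw [← OT15.measure_fst_fiber, ← OT15.measure_fst_fiber,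
        ← Measure.map_apply measurable_fst (measurableSet_singleton x),
        ← Measure.map_apply measurable_fst (measurableSet_singleton x), hfst]
    calc ∑' y, (γ {(x, y)}).toReal
        = (∑' y, γ {(x, y)}).toReal := (ENNReal.tsum_toReal_eq (fun y => measure_ne_top γ _)).symm
      _ = (∑' y, γbar {(x, y)}).toReal := by rw [h1]
      _ = ∑' y, (γbar {(x, y)}).toReal := ENNReal.tsum_toReal_eq (fun y => measure_ne_top γbar _)
  · -- cols
    intro y
    have h1 : (∑' x, γ {(x, y)}) = ∑' x, γbar {(x, y)} := by
      rw [← OT15.measure_snd_fiber, ← OT15.measure_snd_fiber,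
        ← Measure.map_apply measurable_snd (measurableSet_singleton y),
        ← Measure.map_apply measurable_snd (measurableSet_singleton y), hsnd]
    calc ∑' x, (γ {(x, y)}).toReal
        = (∑' x, γ {(x, y)}).toReal := (ENNReal.tsum_toReal_eq (fun x => measure_ne_top γ _)).symm
      _ = (∑' x, γbar {(x, y)}).toReal := by rw [h1]
      _ = ∑' x, (γbar {(x, y)}).toReal := ENNReal.tsum_toReal_eq (fun x => measure_ne_top γbar _)
  · -- cyclical monotonicity
    intro W hA hB
    have hfa : ∀ i, γ {W.aedge i} ≠ 0 := by
      intro i h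
      have := hA i
      simp only [h, ENNReal.toReal_zero, lt_self_iff_false] at this
    have hfb : ∀ i, γbar {W.bedge i} ≠ 0 := by
      intro i h
      have := hB i
      simp only [h, ENNReal.toReal_zero, lt_self_iff_false] at this
    have hmw := hmono (W.n + 1) (finRotate (W.n + 1))⁻¹ 1
      (fun j => W.xs (finRotate _ j)) W.ys (fun j => hfa j)
    simp only [Equiv.Perm.inv_def, Equiv.apply_symm_apply, Equiv.Perm.coe_one, id_eq] at hmw
    have hmw' : ∑ j, c (W.aedge j) ≤ ∑ j, c (W.bedge j) := hmw
    have hL : ∀ j, (((c (W.aedge j)).toReal : ℝ) : EReal) = c (W.aedge j) := fun j =>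
      EReal.coe_toReal (hatomγ _ (hfa j)).1 (hatomγ _ (hfa j)).2
    have hR : ∀ j, (((c (W.bedge j)).toReal : ℝ) : EReal) = c (W.bedge j) := fun j =>
      EReal.coe_toReal (hatomγb _ (hfb j)).1 (hatomγb _ (hfb j)).2
    have hfinal : ((∑ j, (c (W.aedge j)).toReal : ℝ) : EReal)
        ≤ ((∑ j, (c (W.bedge j)).toReal : ℝ) : EReal) := by
      rw [OT15.ecoe_sum, OT15.ecoe_sum]
      calc ∑ j, (((c (W.aedge j)).toReal : ℝ) : EReal)
          = ∑ j, c (W.aedge j) := Finset.sum_congr rfl (fun j _ => hL j)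
        _ ≤ ∑ j, c (W.bedge j) := hmw'
        _ = ∑ j, (((c (W.bedge j)).toReal : ℝ) : EReal) :=
            Finset.sum_congr rfl (fun j _ => (hR j).symm)
    exact EReal.coe_le_coe_iff.mp hfinal
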